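/- Let F be a (2,3)-spread of V(7,2) and let T be a 5-dimensional subspace of V(7,2). Then T contains at least 16 four-dimensional subspaces W such that no member of F is contained in W. -/

import Mathlib

abbrev V72 := Fin 7 → ZMod 2

/-- `F` is a (2,3)-spread of `V(7,2)`. -/
def IsSpread23 (F : Set (Submodule (ZMod 2) V72)) : Prop :=
  (∀ S ∈ F, Module.finrank (ZMod 2) S = 3) ∧
  ∀ s : Submodule (ZMod 2) V72, Module.finrank (ZMod 2) s = 2 →
    ∃! S, S ∈ F ∧ s ≤ S

open Module Submodule Finset
open scoped Classical

noncomputable section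

abbrev Sub2 := Submodule (ZMod 2) V72

instance : Finite Sub2 := Finite.of_injective _ SetLike.coe_injective
noncomputable instance : Fintype Sub2 := Fintype.ofFinite _

lemma zmod2_cases (a : ZMod 2) : a = 0 ∨ a = 1 := by fin_cases a; exacts [Or.inl rfl, Or.inr rfl]

lemma card_sub (U : Sub2) : (U : Set V72).toFinset.card = 2 ^ (finrank (ZMod 2) U) := by
  rw [Set.toFinset_card]
  have := card_eq_pow_finrank (K := ZMod 2) (V := U)
  simpa [ZMod.card] using this

lemma finrank_span_pair {x y : V72} (hx : x ≠ 0) (hy : y ≠ 0) (hxy : x ≠ y) :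
    finrank (ZMod 2) (span (ZMod 2) {x, y}) = 2 := by
  have hli : LinearIndependent (ZMod 2) ((↑) : ({x, y} : Set V72) → V72) := by
    refine linearIndepOn_id_pair hx (fun a ha => ?_)
    rcases zmod2_cases a with h | h <;> subst h <;> simp_all
  rw [finrank_span_set_eq_card hli]
  simp [Set.toFinset_insert, hxy]

lemma span_pair_eq {L : Sub2} (hL : finrank (ZMod 2) L = 2) {x y : V72}
    (hxL : x ∈ L) (hyL : y ∈ L) (hx : x ≠ 0) (hy : y ≠ 0) (hxy : x ≠ y) :
    span (ZMod 2) {x, y} = L := by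
  refine eq_of_le_of_finrank_eq (span_le.2 ?_) ?_
  · intro z hz; rcases hz with h | h <;> simp_all
  · rw [finrank_span_pair hx hy hxy, hL]

lemma span_single_eq {P : Sub2} (hP : finrank (ZMod 2) P = 1) {x : V72}
    (hxP : x ∈ P) (hx : x ≠ 0) : span (ZMod 2) {x} = P := by
  refine eq_of_le_of_finrank_eq (span_le.2 (by simp [hxP])) ?_
  rw [finrank_span_singleton hx, hP]

lemma card_mul_of_fibers {α β : Type*} [DecidableEq β] {f : α → β} {s : Finset α} {t : Finset β}
    (Hf : ∀ a ∈ s, f a ∈ t) (n : ℕ) (hn : ∀ b ∈ t, (s.filter (fun a => f a = b)).card = n) :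
    s.card = n * t.card :=
  le_antisymm (card_le_mul_card_image_of_maps_to Hf n (fun b hb => (hn b hb).le))
    (mul_card_image_le_card_of_maps_to Hf n (fun b hb => (hn b hb).ge))

def ptsOf (U : Sub2) : Finset Sub2 :=
  univ.filter (fun P => P ≤ U ∧ finrank (ZMod 2) P = 1)

def linesOf (U : Sub2) : Finset Sub2 :=
  univ.filter (fun L => L ≤ U ∧ finrank (ZMod 2) L = 2)

lemma ptsOf_card (U : Sub2) : (ptsOf U).card = 2 ^ finrank (ZMod 2) U - 1 := by
  classical
  have h := card_mul_of_fibers (f := fun x => span (ZMod 2) {x})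
      (s := ((U : Set V72).toFinset).erase 0) (t := ptsOf U) ?_ 1 ?_
  · have hs : (((U : Set V72).toFinset).erase 0).card = 2 ^ finrank (ZMod 2) U - 1 := by
      rw [card_erase_of_mem (by simp [U.zero_mem]), card_sub]
    omega
  · intro x hx
    rw [mem_erase, Set.mem_toFinset] at hx
    simp only [ptsOf, mem_filter, mem_univ, true_and]
    exact ⟨span_le.2 (by simp [hx.2]), finrank_span_singleton hx.1⟩
  · intro P hP
    simp only [ptsOf, mem_filter, mem_univ, true_and] at hP
    have : (((U : Set V72).toFinset).erase 0).filter (fun x => span (ZMod 2) {x} = P)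
        = ((P : Set V72).toFinset).erase 0 := by
      ext z
      simp only [mem_filter, mem_erase, Set.mem_toFinset, SetLike.mem_coe]
      constructor
      · rintro ⟨⟨hz0, hzU⟩, rfl⟩
        exact ⟨hz0, mem_span_singleton_self z⟩
      · rintro ⟨hz0, hzP⟩
        exact ⟨⟨hz0, hP.1 hzP⟩, span_single_eq hP.2 hzP hz0⟩
    rw [this, card_erase_of_mem (by simp [P.zero_mem]), card_sub, hP.2]
    norm_num


lemma sq_sub_helper (n : ℕ) : n * n - n = n * (n - 1) := (Nat.mul_sub_one n n).symm

lemma linesOf_card (U : Sub2) :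
    6 * (linesOf U).card = (2 ^ finrank (ZMod 2) U - 1) * (2 ^ finrank (ZMod 2) U - 2) := by
  classical
  have h := card_mul_of_fibers (f := fun p : V72 × V72 => span (ZMod 2) {p.1, p.2})
      (s := (((U : Set V72).toFinset).erase 0).offDiag) (t := linesOf U) ?_ 6 ?_
  · have hs : ((((U : Set V72).toFinset).erase 0).offDiag).card
        = (2 ^ finrank (ZMod 2) U - 1) * (2 ^ finrank (ZMod 2) U - 2) := by
      rw [offDiag_card, card_erase_of_mem (by simp [U.zero_mem]), card_sub, sq_sub_helper]
      congr 1
    omega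
  · rintro ⟨x, y⟩ hxy
    rw [mem_offDiag] at hxy
    obtain ⟨hx, hy, hne⟩ := hxy
    rw [mem_erase, Set.mem_toFinset] at hx hy
    simp only [linesOf, mem_filter, mem_univ, true_and]
    constructor
    · refine span_le.2 ?_
      intro z hz; rcases hz with h | h <;> simp_all
    · exact finrank_span_pair hx.1 hy.1 hne
  · intro L hL
    simp only [linesOf, mem_filter, mem_univ, true_and] at hL
    have hfib : ((((U : Set V72).toFinset).erase 0).offDiag).filter
        (fun p : V72 × V72 => span (ZMod 2) {p.1, p.2} = L)
        = (((L : Set V72).toFinset).erase 0).offDiag := by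
      ext ⟨x, y⟩
      simp only [mem_filter, mem_offDiag, mem_erase, Set.mem_toFinset, SetLike.mem_coe]
      constructor
      · rintro ⟨⟨⟨hx0, hxU⟩, ⟨hy0, hyU⟩, hne⟩, rfl⟩
        exact ⟨⟨hx0, subset_span (by simp)⟩, ⟨hy0, subset_span (by simp)⟩, hne⟩
      · rintro ⟨⟨hx0, hxL⟩, ⟨hy0, hyL⟩, hne⟩
        exact ⟨⟨⟨hx0, hL.1 hxL⟩, ⟨hy0, hL.1 hyL⟩, hne⟩,
          span_pair_eq hL.2 hxL hyL hx0 hy0 hne⟩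
    rw [hfib, offDiag_card, card_erase_of_mem (by simp [L.zero_mem]), card_sub, hL.2]
    norm_num

lemma linesThrough_card (U : Sub2) {p : V72} (hpU : p ∈ U) (hp0 : p ≠ 0) :
    2 * ((linesOf U).filter (fun L => p ∈ L)).card = 2 ^ finrank (ZMod 2) U - 2 := by
  classical
  have h := card_mul_of_fibers (f := fun x : V72 => span (ZMod 2) {p, x})
      (s := ((U : Set V72).toFinset) \ {0, p}) (t := (linesOf U).filter (fun L => p ∈ L)) ?_ 2 ?_
  · have hsub : ({0, p} : Finset V72) ⊆ (U : Set V72).toFinset := by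
      intro z hz
      simp only [mem_insert, mem_singleton] at hz
      rcases hz with rfl | rfl <;> simp [U.zero_mem, hpU]
    have hcard2 : ({0, p} : Finset V72).card = 2 := by
      rw [card_insert_of_notMem (by simp [Ne.symm hp0]), card_singleton]
    have hs : (((U : Set V72).toFinset) \ {0, p}).card = 2 ^ finrank (ZMod 2) U - 2 := by
      rw [card_sdiff_of_subset hsub, card_sub, hcard2]
    rw [← h, hs]
  · intro x hx
    simp only [mem_sdiff, Set.mem_toFinset, mem_insert, mem_singleton, SetLike.mem_coe,
      not_or] at hx
    obtain ⟨hxU, hx0, hxp⟩ := hx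
    simp only [mem_filter, linesOf, mem_univ, true_and]
    refine ⟨⟨span_le.2 ?_, finrank_span_pair hp0 hx0 (fun h => hxp h.symm)⟩,
      subset_span (by simp)⟩
    intro z hz; rcases hz with h | h <;> simp_all
  · intro L hL
    simp only [mem_filter, linesOf, mem_univ, true_and] at hL
    obtain ⟨⟨hLU, hL2⟩, hpL⟩ := hL
    have hsub : ({0, p} : Finset V72) ⊆ (L : Set V72).toFinset := by
      intro z hz
      simp only [mem_insert, mem_singleton] at hz
      rcases hz with rfl | rfl <;> simp [L.zero_mem, hpL]
    have hcard2 : ({0, p} : Finset V72).card = 2 := by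
      rw [card_insert_of_notMem (by simp [Ne.symm hp0]), card_singleton]
    have hfib : (((U : Set V72).toFinset) \ {0, p}).filter
        (fun x => span (ZMod 2) {p, x} = L) = ((L : Set V72).toFinset) \ {0, p} := by
      ext z
      simp only [mem_filter, mem_sdiff, Set.mem_toFinset, mem_insert, mem_singleton,
        SetLike.mem_coe, not_or]
      constructor
      · rintro ⟨⟨hzU, hz⟩, rfl⟩
        exact ⟨subset_span (by simp), hz⟩
      · rintro ⟨hzL, hz0, hzp⟩
        exact ⟨⟨hLU hzL, hz0, hzp⟩, span_pair_eq hL2 hpL hzL hp0 hz0 (fun h => hzp h.symm)⟩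
    rw [hfib, card_sdiff_of_subset hsub, card_sub, hL2, hcard2]
    norm_num

lemma finrank_V72 : finrank (ZMod 2) V72 = 7 := Module.finrank_fin_fun (ZMod 2)

lemma finrank_sup_span {S : Sub2} {x : V72} (hx : x ∉ S) :
    finrank (ZMod 2) ↥(S ⊔ span (ZMod 2) {x}) = finrank (ZMod 2) S + 1 := by
  have hx0 : x ≠ 0 := fun h => hx (h ▸ S.zero_mem)
  have hinf : S ⊓ span (ZMod 2) {x} = ⊥ := by
    refine (Submodule.eq_bot_iff _).2 (fun y hy => ?_)
    obtain ⟨hyS, hyx⟩ := hy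
    rw [SetLike.mem_coe, mem_span_singleton] at hyx
    obtain ⟨a, rfl⟩ := hyx
    rcases zmod2_cases a with rfl | rfl
    · simp
    · simp at hyS; exact absurd hyS hx
  have := Submodule.finrank_sup_add_finrank_inf_eq S (span (ZMod 2) {x})
  rw [hinf, finrank_span_singleton hx0] at this
  simpa using this

lemma midspaces_card {S T : Sub2} (hST : S ≤ T) (hS3 : finrank (ZMod 2) S = 3)
    (hT5 : finrank (ZMod 2) T = 5) :
    (univ.filter (fun W : Sub2 => S ≤ W ∧ W ≤ T ∧ finrank (ZMod 2) W = 4)).card = 3 := by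
  classical
  have hsub : (S : Set V72).toFinset ⊆ (T : Set V72).toFinset := by
    intro z hz; rw [Set.mem_toFinset] at *; exact hST hz
  have h := card_mul_of_fibers (f := fun x : V72 => S ⊔ span (ZMod 2) {x})
      (s := (T : Set V72).toFinset \ (S : Set V72).toFinset)
      (t := univ.filter (fun W : Sub2 => S ≤ W ∧ W ≤ T ∧ finrank (ZMod 2) W = 4)) ?_ 8 ?_
  · have hs : ((T : Set V72).toFinset \ (S : Set V72).toFinset).card = 24 := by
      rw [card_sdiff_of_subset hsub, card_sub, card_sub, hS3, hT5]
      norm_num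
    omega
  · intro x hx
    simp only [mem_sdiff, Set.mem_toFinset, SetLike.mem_coe] at hx
    simp only [mem_filter, mem_univ, true_and]
    refine ⟨le_sup_left, sup_le hST (span_le.2 (by simp [hx.1])), ?_⟩
    rw [finrank_sup_span hx.2, hS3]
  · intro W hW
    simp only [mem_filter, mem_univ, true_and] at hW
    obtain ⟨hSW, hWT, hW4⟩ := hW
    have hsubW : (S : Set V72).toFinset ⊆ (W : Set V72).toFinset := by
      intro z hz; rw [Set.mem_toFinset] at *; exact hSW hz
    have hfib : ((T : Set V72).toFinset \ (S : Set V72).toFinset).filter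
        (fun x => S ⊔ span (ZMod 2) {x} = W)
        = (W : Set V72).toFinset \ (S : Set V72).toFinset := by
      ext z
      simp only [mem_filter, mem_sdiff, Set.mem_toFinset, SetLike.mem_coe]
      constructor
      · rintro ⟨⟨hzT, hzS⟩, rfl⟩
        exact ⟨(le_sup_right : span (ZMod 2) {z} ≤ S ⊔ _) (mem_span_singleton_self z), hzS⟩
      · rintro ⟨hzW, hzS⟩
        refine ⟨⟨hWT hzW, hzS⟩, ?_⟩
        refine eq_of_le_of_finrank_eq (sup_le hSW (span_le.2 (by simp [hzW]))) ?_
        rw [finrank_sup_span hzS, hS3, hW4]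
    rw [hfib, card_sdiff_of_subset hsubW, card_sub, card_sub, hS3, hW4]
    norm_num

lemma hyperplanes_card_ge {T : Sub2} (hT5 : finrank (ZMod 2) T = 5) :
    31 ≤ (univ.filter (fun W : Sub2 => W ≤ T ∧ finrank (ZMod 2) W = 4)).card := by
  classical
  haveI : Finite (Module.Dual (ZMod 2) ↥T) :=
    Finite.of_injective (fun f => (f : ↥T → ZMod 2)) DFunLike.coe_injective
  letI : Fintype (Module.Dual (ZMod 2) ↥T) := Fintype.ofFinite _
  have hcard : Fintype.card (Module.Dual (ZMod 2) ↥T) = 32 := by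
    have h1 := card_eq_pow_finrank (K := ZMod 2) (V := Module.Dual (ZMod 2) ↥T)
    rw [Subspace.dual_finrank_eq, hT5, ZMod.card] at h1
    norm_num at h1
    exact h1
  have hker : ∀ φ : Module.Dual (ZMod 2) ↥T, φ ≠ 0 →
      finrank (ZMod 2) (LinearMap.ker φ) = 4 := by
    intro φ hφ
    have h2 := LinearMap.finrank_range_add_finrank_ker φ
    have hr : finrank (ZMod 2) (LinearMap.range φ) = 1 := by
      have hle : finrank (ZMod 2) (LinearMap.range φ) ≤ 1 := by
        have := Submodule.finrank_le (LinearMap.range φ)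
        simpa using this
      have hne : LinearMap.range φ ≠ ⊥ := by
        rw [Ne, LinearMap.range_eq_bot]; exact hφ
      have hpos : 0 < finrank (ZMod 2) (LinearMap.range φ) := by
        rw [Module.finrank_pos_iff_exists_ne_zero]
        obtain ⟨x, hx⟩ := (Submodule.ne_bot_iff _).1 hne
        exact ⟨⟨x, hx.1⟩, by simpa using hx.2⟩
      omega
    rw [hr, hT5] at h2
    omega
  have hmem : ∀ φ : Module.Dual (ZMod 2) ↥T, φ ∈ univ.filter (fun ψ => ψ ≠ 0) →
      Submodule.map T.subtype (LinearMap.ker φ) ∈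
        univ.filter (fun W : Sub2 => W ≤ T ∧ finrank (ZMod 2) W = 4) := by
    intro φ hφ
    rw [mem_filter] at hφ
    rw [mem_filter]
    refine ⟨mem_univ _, Submodule.map_subtype_le _ _, ?_⟩
    rw [Submodule.finrank_map_subtype_eq]
    exact hker φ hφ.2
  have hinj : Set.InjOn (fun φ : Module.Dual (ZMod 2) ↥T =>
      Submodule.map T.subtype (LinearMap.ker φ))
      ↑((univ : Finset (Module.Dual (ZMod 2) ↥T)).filter (fun ψ => ψ ≠ 0)) := by
    intro φ hφ ψ hψ heq
    simp only [coe_filter, Set.mem_setOf_eq, mem_univ, true_and] at hφ hψ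
    have hk : LinearMap.ker φ = LinearMap.ker ψ :=
      Submodule.map_injective_of_injective T.injective_subtype heq
    ext x
    by_cases hx : x ∈ LinearMap.ker φ
    · have hx' : x ∈ LinearMap.ker ψ := hk ▸ hx
      rw [LinearMap.mem_ker] at hx hx'
      rw [hx, hx']
    · have hx' : x ∉ LinearMap.ker ψ := fun h => hx (hk ▸ h)
      rw [LinearMap.mem_ker] at hx hx'
      rcases zmod2_cases (φ x) with h | h
      · exact absurd h hx
      rcases zmod2_cases (ψ x) with h' | h'
      · exact absurd h' hx'
      rw [h, h']
  have := Finset.card_le_card_of_injOn _ hmem hinj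
  have hD : ((univ : Finset (Module.Dual (ZMod 2) ↥T)).filter (fun ψ => ψ ≠ 0)).card = 31 := by
    rw [Finset.filter_ne' univ 0, card_erase_of_mem (mem_univ _), card_univ, hcard]
  omega

lemma card_filter_product {α β : Type*} [DecidableEq α] (s : Finset α) (t : Finset β)
    (P : α → β → Prop) [∀ a b, Decidable (P a b)] :
    ((s ×ˢ t).filter (fun q => P q.1 q.2)).card = ∑ a ∈ s, (t.filter (fun b => P a b)).card := by
  rw [card_eq_sum_card_fiberwise (f := Prod.fst)
    (fun q hq => (mem_product.1 (mem_filter.1 hq).1).1)]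
  refine Finset.sum_congr rfl (fun a ha => ?_)
  refine Finset.card_nbij' (fun q => q.2) (fun b => (a, b)) ?_ ?_ ?_ ?_
  · intro q hq
    simp only [Finset.mem_coe, mem_filter, mem_product] at hq ⊢
    obtain ⟨⟨⟨h1, h2⟩, h3⟩, h4⟩ := hq
    subst h4; exact ⟨h2, h3⟩
  · intro b hb
    simp only [Finset.mem_coe, mem_filter, mem_product] at hb ⊢
    exact ⟨⟨⟨ha, hb.1⟩, hb.2⟩, trivial⟩
  · intro q hq
    simp only [Finset.mem_coe, mem_filter] at hq
    rw [← hq.2]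
  · intro b _; rfl

lemma card_filter_product' {α β : Type*} [DecidableEq β] (s : Finset α) (t : Finset β)
    (P : α → β → Prop) [∀ a b, Decidable (P a b)] :
    ((s ×ˢ t).filter (fun q => P q.1 q.2)).card = ∑ b ∈ t, (s.filter (fun a => P a b)).card := by
  rw [card_eq_sum_card_fiberwise (f := Prod.snd)
    (fun q hq => (mem_product.1 (mem_filter.1 hq).1).2)]
  refine Finset.sum_congr rfl (fun b hb => ?_)
  refine Finset.card_nbij' (fun q => q.1) (fun a => (a, b)) ?_ ?_ ?_ ?_
  · intro q hq
    simp only [Finset.mem_coe, mem_filter, mem_product] at hq ⊢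
    obtain ⟨⟨⟨h1, h2⟩, h3⟩, h4⟩ := hq
    subst h4; exact ⟨h1, h3⟩
  · intro a ha
    simp only [Finset.mem_coe, mem_filter, mem_product] at ha ⊢
    exact ⟨⟨⟨ha.1, hb⟩, ha.2⟩, trivial⟩
  · intro q hq
    simp only [Finset.mem_coe, mem_filter] at hq
    rw [← hq.2]
  · intro a _; rfl

lemma point_degree {F : Set Sub2} (hF : IsSpread23 F) (Fc : Finset Sub2)
    (hFc : ∀ S, S ∈ Fc ↔ S ∈ F) {P : Sub2} (hP1 : finrank (ZMod 2) P = 1) :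
    21 ≤ (Fc.filter (fun S => P ≤ S)).card := by
  classical
  have hPbot : P ≠ ⊥ := by
    intro h; rw [h] at hP1; simp [finrank_bot] at hP1
  obtain ⟨p, hpP, hp0⟩ := (Submodule.ne_bot_iff _).1 hPbot
  have hspan : span (ZMod 2) {p} = P := span_single_eq hP1 hpP hp0
  set f : Sub2 → Sub2 := fun L =>
    if h : finrank (ZMod 2) L = 2 then (hF.2 L h).choose else ⊥ with hf
  have hfspec : ∀ L : Sub2, ∀ h : finrank (ZMod 2) L = 2,
      (f L ∈ F ∧ L ≤ f L) ∧ ∀ S', S' ∈ F ∧ L ≤ S' → S' = f L := by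
    intro L h
    rw [hf]; simp only [dif_pos h]
    exact ⟨(hF.2 L h).choose_spec.1, (hF.2 L h).choose_spec.2⟩
  have hcs : 2 * ((linesOf ⊤).filter (fun L => p ∈ L)).card = 126 := by
    have := linesThrough_card (⊤ : Sub2) (Submodule.mem_top (x := p)) hp0
    rwa [finrank_top, finrank_V72] at this
  have hmaps : ∀ L ∈ (linesOf ⊤).filter (fun L => p ∈ L),
      f L ∈ Fc.filter (fun S => P ≤ S) := by
    intro L hL
    simp only [mem_filter, linesOf, mem_univ, true_and] at hL
    obtain ⟨⟨-, hL2⟩, hpL⟩ := hL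
    obtain ⟨⟨hmem, hle⟩, -⟩ := hfspec L hL2
    rw [mem_filter, hFc]
    exact ⟨hmem, hspan ▸ span_le.2 (by simpa using hle hpL)⟩
  have hfib : ∀ S ∈ Fc.filter (fun S => P ≤ S),
      (((linesOf ⊤).filter (fun L => p ∈ L)).filter (fun L => f L = S)).card ≤ 3 := by
    intro S hS
    rw [mem_filter, hFc] at hS
    have hS3 : finrank (ZMod 2) S = 3 := hF.1 S hS.1
    have hpS : p ∈ S := hS.2 hpP
    have h3 : 2 * ((linesOf S).filter (fun L => p ∈ L)).card = 6 := by
      have := linesThrough_card S hpS hp0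
      rwa [hS3] at this
    refine le_trans (card_le_card ?_) (by omega : ((linesOf S).filter (fun L => p ∈ L)).card ≤ 3)
    intro L hL
    simp only [mem_filter, linesOf, mem_univ, true_and] at hL ⊢
    obtain ⟨⟨⟨-, hL2⟩, hpL⟩, hfL⟩ := hL
    obtain ⟨⟨-, hle⟩, -⟩ := hfspec L hL2
    exact ⟨⟨hfL ▸ hle, hL2⟩, hpL⟩
  have := card_le_mul_card_image_of_maps_to hmaps 3 hfib
  omega

lemma key_ineq {T S : Sub2} (hS3 : finrank (ZMod 2) S = 3) :
    ((ptsOf T).filter (fun P => P ≤ S)).card + 8 * (if S ≤ T then 1 else 0)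
      ≤ 2 * ((linesOf T).filter (fun L => L ≤ S)).card + 1 := by
  classical
  have hpts : (ptsOf T).filter (fun P => P ≤ S) = ptsOf (S ⊓ T) := by
    ext P; simp only [ptsOf, mem_filter, mem_univ, true_and, le_inf_iff]; tauto
  have hlines : (linesOf T).filter (fun L => L ≤ S) = linesOf (S ⊓ T) := by
    ext L; simp only [linesOf, mem_filter, mem_univ, true_and, le_inf_iff]; tauto
  have hpc := ptsOf_card (S ⊓ T)
  have hlc := linesOf_card (S ⊓ T)
  have hd : finrank (ZMod 2) ↥(S ⊓ T) ≤ 3 := hS3 ▸ Submodule.finrank_mono inf_le_left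
  rw [hpts, hlines]
  by_cases hST : S ≤ T
  · rw [if_pos hST, inf_eq_left.2 hST] at *
    rw [hS3] at hpc hlc
    norm_num at hpc hlc
    omega
  · rw [if_neg hST]
    have hne3 : finrank (ZMod 2) ↥(S ⊓ T) ≠ 3 := by
      intro h
      exact hST (inf_eq_left.1 (eq_of_le_of_finrank_eq inf_le_left (by rw [hS3, h])))
    obtain h | h | h : finrank (ZMod 2) ↥(S ⊓ T) = 0 ∨ finrank (ZMod 2) ↥(S ⊓ T) = 1 ∨
        finrank (ZMod 2) ↥(S ⊓ T) = 2 := by omega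
    all_goals
      rw [h] at hpc hlc
      norm_num [-Finset.card_eq_zero] at hpc hlc
      omega

theorem spread23_poor_spaces (F : Set (Submodule (ZMod 2) V72)) (hF : IsSpread23 F)
    (T : Submodule (ZMod 2) V72) (hT : Module.finrank (ZMod 2) T = 5) :
    16 ≤ {W : Submodule (ZMod 2) V72 |
      W ≤ T ∧ Module.finrank (ZMod 2) W = 4 ∧ ∀ S ∈ F, ¬ S ≤ W}.ncard := by
  classical
  set Fc : Finset Sub2 := (Set.toFinite F).toFinset with hFcdef
  have hFc : ∀ S, S ∈ Fc ↔ S ∈ F := fun S => Set.Finite.mem_toFinset _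
  -- counts of lines and points
  have hlinesT : (linesOf T).card = 155 := by
    have := linesOf_card T; rw [hT] at this; norm_num at this; omega
  have hptsT : (ptsOf T).card = 31 := by
    rw [ptsOf_card T, hT]; norm_num
  have hlinesV : (linesOf ⊤).card = 2667 := by
    have := linesOf_card (⊤ : Sub2); rw [finrank_top, finrank_V72] at this
    norm_num at this; omega
  -- each member has finrank 3 and exactly 7 lines
  have hmem3 : ∀ S ∈ Fc, finrank (ZMod 2) S = 3 := fun S hS => hF.1 S ((hFc S).1 hS)
  -- |F| ≤ 381
  have hFcard : Fc.card ≤ 381 := by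
    have hsum : ((Fc ×ˢ linesOf ⊤).filter (fun q => q.2 ≤ q.1)).card
        = ∑ S ∈ Fc, ((linesOf ⊤).filter (fun L => L ≤ S)).card :=
      card_filter_product Fc (linesOf ⊤) (fun S L => L ≤ S)
    have hsum' : ((Fc ×ˢ linesOf ⊤).filter (fun q => q.2 ≤ q.1)).card
        = ∑ L ∈ linesOf ⊤, (Fc.filter (fun S => L ≤ S)).card :=
      card_filter_product' Fc (linesOf ⊤) (fun S L => L ≤ S)
    have h7 : ∀ S ∈ Fc, ((linesOf ⊤).filter (fun L => L ≤ S)).card = 7 := by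
      intro S hS
      have : (linesOf ⊤).filter (fun L => L ≤ S) = linesOf S := by
        ext L; simp only [linesOf, mem_filter, mem_univ, true_and, le_top]; tauto
      rw [this]
      have := linesOf_card S; rw [hmem3 S hS] at this; norm_num at this; omega
    have hle1 : ∀ L ∈ linesOf ⊤, (Fc.filter (fun S => L ≤ S)).card ≤ 1 := by
      intro L hL
      simp only [linesOf, mem_filter, mem_univ, true_and] at hL
      refine card_le_one.2 (fun S1 h1 S2 h2 => ?_)
      rw [mem_filter, hFc] at h1 h2
      obtain ⟨S0, -, huniq⟩ := hF.2 L hL.2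
      rw [huniq S1 ⟨h1.1, h1.2⟩, huniq S2 ⟨h2.1, h2.2⟩]
    have e1 : ∑ S ∈ Fc, ((linesOf ⊤).filter (fun L => L ≤ S)).card = 7 * Fc.card := by
      rw [Finset.sum_congr rfl h7]; simp [mul_comm]
    have e2 : ∑ L ∈ linesOf ⊤, (Fc.filter (fun S => L ≤ S)).card ≤ 2667 := by
      calc ∑ L ∈ linesOf ⊤, (Fc.filter (fun S => L ≤ S)).card
          ≤ ∑ _L ∈ linesOf ⊤, 1 := Finset.sum_le_sum hle1
        _ = 2667 := by rw [Finset.sum_const, smul_eq_mul, hlinesV, mul_one]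
    omega
  -- sum of line counts within T ≤ 155
  have h155 : ∑ S ∈ Fc, ((linesOf T).filter (fun L => L ≤ S)).card ≤ 155 := by
    rw [← card_filter_product Fc (linesOf T) (fun S L => L ≤ S)]
    rw [card_filter_product' Fc (linesOf T) (fun S L => L ≤ S)]
    have hle1 : ∀ L ∈ linesOf T, (Fc.filter (fun S => L ≤ S)).card ≤ 1 := by
      intro L hL
      simp only [linesOf, mem_filter, mem_univ, true_and] at hL
      refine card_le_one.2 (fun S1 h1 S2 h2 => ?_)
      rw [mem_filter, hFc] at h1 h2
      obtain ⟨S0, -, huniq⟩ := hF.2 L hL.2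
      rw [huniq S1 ⟨h1.1, h1.2⟩, huniq S2 ⟨h2.1, h2.2⟩]
    calc ∑ L ∈ linesOf T, (Fc.filter (fun S => L ≤ S)).card
        ≤ ∑ _L ∈ linesOf T, 1 := Finset.sum_le_sum hle1
      _ = 155 := by rw [Finset.sum_const, smul_eq_mul, hlinesT, mul_one]
  -- sum of point counts within T ≥ 651
  have h651 : 651 ≤ ∑ S ∈ Fc, ((ptsOf T).filter (fun P => P ≤ S)).card := by
    rw [← card_filter_product Fc (ptsOf T) (fun S P => P ≤ S)]
    rw [card_filter_product' Fc (ptsOf T) (fun S P => P ≤ S)]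
    have h21 : ∀ P ∈ ptsOf T, 21 ≤ (Fc.filter (fun S => P ≤ S)).card := by
      intro P hP
      simp only [ptsOf, mem_filter, mem_univ, true_and] at hP
      exact point_degree hF Fc hFc hP.2
    calc (651 : ℕ) = ∑ _P ∈ ptsOf T, 21 := by
          rw [Finset.sum_const, smul_eq_mul, hptsT]
      _ ≤ ∑ P ∈ ptsOf T, (Fc.filter (fun S => P ≤ S)).card := Finset.sum_le_sum h21
  -- the number of members inside T is at most 5
  have hA : (Fc.filter (fun S => S ≤ T)).card ≤ 5 := by
    have hkey : ∀ S ∈ Fc,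
        ((ptsOf T).filter (fun P => P ≤ S)).card + 8 * (if S ≤ T then 1 else 0)
          ≤ 2 * ((linesOf T).filter (fun L => L ≤ S)).card + 1 := fun S hS =>
      key_ineq (hmem3 S hS)
    have hsumkey := Finset.sum_le_sum hkey
    rw [Finset.sum_add_distrib] at hsumkey
    have hind : ∑ S ∈ Fc, 8 * (if S ≤ T then 1 else 0)
        = 8 * (Fc.filter (fun S => S ≤ T)).card := by
      rw [← Finset.mul_sum, ← Finset.card_filter]
    have hrhs : ∑ S ∈ Fc, (2 * ((linesOf T).filter (fun L => L ≤ S)).card + 1)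
        = 2 * (∑ S ∈ Fc, ((linesOf T).filter (fun L => L ≤ S)).card) + Fc.card := by
      rw [Finset.sum_add_distrib, Finset.sum_const, ← Finset.mul_sum, smul_eq_mul, mul_one]
    rw [hind, hrhs] at hsumkey
    omega
  -- rich hyperplanes are at most 15
  set richF : Finset Sub2 := univ.filter
    (fun W => W ≤ T ∧ finrank (ZMod 2) W = 4 ∧ ∃ S ∈ F, S ≤ W) with hrichdef
  have hrich : richF.card ≤ 15 := by
    set A : Finset Sub2 := Fc.filter (fun S => S ≤ T) with hAdef
    have h1 : richF.card ≤ ((A ×ˢ richF).filter (fun q => q.1 ≤ q.2)).card := by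
      have := mul_card_image_le_card_of_maps_to
        (f := Prod.snd) (s := (A ×ˢ richF).filter (fun q => q.1 ≤ q.2)) (t := richF)
        (fun q hq => (mem_product.1 (mem_filter.1 hq).1).2) 1 ?_
      · omega
      intro W hW
      have hW' := hW
      rw [hrichdef, mem_filter] at hW'
      obtain ⟨-, hWT, hW4, S, hSF, hSW⟩ := hW'
      refine Nat.one_le_iff_ne_zero.2 (Finset.card_ne_zero_of_mem (a := (S, W)) ?_)
      simp only [mem_filter, mem_product]
      refine ⟨⟨⟨?_, hW⟩, hSW⟩, trivial⟩
      rw [hAdef, mem_filter, hFc]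
      exact ⟨hSF, le_trans hSW hWT⟩
    have h2 : ((A ×ˢ richF).filter (fun q => q.1 ≤ q.2)).card
        = ∑ S ∈ A, (richF.filter (fun W => S ≤ W)).card :=
      card_filter_product A richF (fun S W => S ≤ W)
    have h3 : ∀ S ∈ A, (richF.filter (fun W => S ≤ W)).card ≤ 3 := by
      intro S hS
      rw [hAdef, mem_filter] at hS
      have hmid := midspaces_card hS.2 (hmem3 S hS.1) hT
      refine le_trans (card_le_card ?_) hmid.le
      intro W hW
      simp only [hrichdef, mem_filter, mem_univ, true_and] at hW ⊢
      exact ⟨hW.2, hW.1.1, hW.1.2.1⟩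
    have h4 : ∑ S ∈ A, (richF.filter (fun W => S ≤ W)).card ≤ 3 * A.card := by
      calc ∑ S ∈ A, (richF.filter (fun W => S ≤ W)).card ≤ ∑ _S ∈ A, 3 :=
            Finset.sum_le_sum h3
        _ = 3 * A.card := by rw [Finset.sum_const, smul_eq_mul, mul_comm]
    have hA' : A.card ≤ 5 := hA
    omega
  -- conclusion
  set poorF : Finset Sub2 := univ.filter
    (fun W => W ≤ T ∧ finrank (ZMod 2) W = 4 ∧ ∀ S ∈ F, ¬ S ≤ W) with hpoordef
  have hall := hyperplanes_card_ge hT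
  have hsubset : univ.filter (fun W : Sub2 => W ≤ T ∧ finrank (ZMod 2) W = 4)
      ⊆ richF ∪ poorF := by
    intro W hW
    simp only [mem_filter, mem_univ, true_and] at hW
    rw [mem_union, hrichdef, hpoordef]
    simp only [mem_filter, mem_univ, true_and]
    by_cases h : ∃ S ∈ F, S ≤ W
    · exact Or.inl ⟨hW.1, hW.2, h⟩
    · push_neg at h
      exact Or.inr ⟨hW.1, hW.2, h⟩
  have hcard := le_trans hall (le_trans (card_le_card hsubset) (card_union_le _ _))
  have hpoor : 16 ≤ poorF.card := by omega
  have hsetEq : {W : Submodule (ZMod 2) V72 |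
      W ≤ T ∧ Module.finrank (ZMod 2) W = 4 ∧ ∀ S ∈ F, ¬ S ≤ W} = ↑poorF := by
    ext W
    simp only [hpoordef, Set.mem_setOf_eq, coe_filter, mem_univ, true_and, Set.mem_setOf_eq]
  rw [hsetEq, Set.ncard_coe_finset]
  exact hpoor
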